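/- The convergent series identity Y_n^0(z) = (2z)^n e^{1/z} \sum_{k=0}^\infty \frac{(-1)^k}{k! z^k} (\tfrac12 - \tfrac12 k)_n holds for all z \ne 0. -/

import Mathlib

open Finset

/-- Generalized Bessel polynomial `Y_n^μ(z)`. -/
noncomputable def genBessel (n : ℕ) (μ z : ℂ) : ℂ :=
  ∑ k ∈ Finset.range (n + 1),
    (n.choose k : ℂ) * (ascPochhammer ℂ k).eval ((n : ℂ) + μ + 1) * (z / 2) ^ k

noncomputable def besselD : ℕ → ℕ → ℂ
  | 0, 0 => 1
  | 0, _+1 => 0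
  | n+1, 0 => ((n:ℂ) + 1/2) * besselD n 0
  | n+1, t+1 => ((n:ℂ) + 1/2 - ((t:ℂ)+1)/2) * besselD n (t+1) - (1/2) * besselD n t

lemma besselD_zero : ∀ n t : ℕ, n < t → besselD n t = 0
  | 0, _+1, _ => rfl
  | n+1, t+1, h => by
    rw [besselD, besselD_zero n (t+1) (by omega), besselD_zero n t (by omega)]
    ring

lemma besselD_eq_mul : ∀ n t : ℕ, t ≤ n →
    (4:ℂ)^n * (t.factorial : ℂ) * ((n - t).factorial : ℂ) * besselD n t
      = (-1)^t * 2^t * ((2*n - t).factorial : ℂ)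
  | 0, 0, _ => by norm_num [besselD]
  | n+1, 0, _ => by
    have ih := besselD_eq_mul n 0 (by omega)
    rw [besselD]
    have h1 : 2*(n+1) - 0 = (2*n - 0) + 1 + 1 := by omega
    have h2 : (n+1) - 0 = (n - 0) + 1 := by omega
    rw [h1, h2, Nat.factorial_succ, Nat.factorial_succ (2*n-0+1), Nat.factorial_succ (2*n-0)]
    have e1 : ((2*n - 0 : ℕ) : ℂ) = 2*(n:ℂ) := by rw [Nat.sub_zero]; push_cast; ring
    have e2 : ((n - 0 : ℕ) : ℂ) = (n:ℂ) := by rw [Nat.sub_zero]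
    push_cast
    rw [e1, e2]
    linear_combination (4*((n:ℂ)+1)*((n:ℂ)+1/2)) * ih
  | n+1, t+1, h => by
    rcases Nat.lt_or_ge t n with ht | ht
    · have ih1 := besselD_eq_mul n (t+1) (by omega)
      have ih2 := besselD_eq_mul n t (by omega)
      rw [besselD]
      set a := 2*n - (t+1) with ha
      set b := n - (t+1) with hb
      have h1 : 2*(n+1) - (t+1) = a + 1 + 1 := by omega
      have h2 : (n+1) - (t+1) = b + 1 := by omega
      have h3 : 2*n - t = a + 1 := by omega
      have h4 : n - t = b + 1 := by omega
      have ea : ((a:ℕ) : ℂ) = 2*(n:ℂ) - (t:ℂ) - 1 := by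
        rw [ha]; push_cast [Nat.cast_sub (by omega : t+1 ≤ 2*n)]; ring
      have eb : ((b:ℕ) : ℂ) = (n:ℂ) - (t:ℂ) - 1 := by
        rw [hb]; push_cast [Nat.cast_sub (by omega : t+1 ≤ n)]; ring
      rw [h3, h4] at ih2
      rw [h1, h2]
      rw [Nat.factorial_succ (a+1), Nat.factorial_succ a, Nat.factorial_succ b,
        Nat.factorial_succ t] at *
      push_cast at ih1 ih2 ⊢
      rw [ea, eb] at ih2 ⊢
      linear_combination (4*((n:ℂ) + 1/2 - ((t:ℂ)+1)/2)*((n:ℂ)-(t:ℂ))) * ih1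
        - (2*((t:ℂ)+1)) * ih2
    · have htn : t = n := by omega
      subst htn
      have ih := besselD_eq_mul t t le_rfl
      rw [besselD, besselD_zero t (t+1) (by omega)]
      have h1 : 2*(t+1) - (t+1) = t + 1 := by omega
      have h2 : (t+1) - (t+1) = 0 := by omega
      have h3 : 2*t - t = t := by omega
      have h4 : t - t = 0 := by omega
      rw [h3, h4] at ih
      rw [h1, h2, Nat.factorial_succ t] at *
      push_cast at ih ⊢
      linear_combination (-2*((t:ℂ)+1)) * ih
lemma descPochhammer_succ_eval' (t : ℕ) (x : ℂ) :
    (descPochhammer ℂ (t+1)).eval x = (descPochhammer ℂ t).eval x * (x - t) := by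
  rw [descPochhammer_succ_right]
  simp [Polynomial.eval_mul]

lemma keyA (n : ℕ) (x : ℂ) :
    (ascPochhammer ℂ n).eval ((1 - x)/2) =
      ∑ t ∈ Finset.range (n+1), besselD n t * (descPochhammer ℂ t).eval x := by
  induction n with
  | zero => simp [besselD]
  | succ n ih =>
    rw [ascPochhammer_succ_eval, ih]
    set D : ℕ → ℂ := fun t => (descPochhammer ℂ t).eval x with hD
    have key : ∀ t : ℕ, besselD n t * D t * ((1-x)/2 + n)
        = ((n:ℂ) + 1/2 - (t:ℂ)/2) * (besselD n t * D t)
          - (1/2) * (besselD n t * D (t+1)) := by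
      intro t
      simp only [hD, descPochhammer_succ_eval']
      ring
    rw [Finset.sum_mul]
    calc ∑ t ∈ range (n+1), besselD n t * D t * ((1-x)/2 + n)
        = ∑ t ∈ range (n+1), (((n:ℂ) + 1/2 - (t:ℂ)/2) * (besselD n t * D t)
            - (1/2) * (besselD n t * D (t+1))) := Finset.sum_congr rfl fun t _ => key t
      _ = ∑ t ∈ range (n+1), ((n:ℂ) + 1/2 - (t:ℂ)/2) * (besselD n t * D t)
            - ∑ t ∈ range (n+1), (1/2) * (besselD n t * D (t+1)) := Finset.sum_sub_distrib _ _
      _ = (∑ t ∈ range n, ((n:ℂ) + 1/2 - ((t:ℕ)+1:ℕ)/2) * (besselD n (t+1) * D (t+1))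
            + ((n:ℂ) + 1/2 - (0:ℕ)/2) * (besselD n 0 * D 0))
            - ∑ t ∈ range (n+1), (1/2) * (besselD n t * D (t+1)) := by
          rw [Finset.sum_range_succ']
      _ = (∑ t ∈ range (n+1), ((n:ℂ) + 1/2 - ((t:ℂ)+1)/2) * (besselD n (t+1) * D (t+1))
            + ((n:ℂ) + 1/2) * (besselD n 0 * D 0))
            - ∑ t ∈ range (n+1), (1/2) * (besselD n t * D (t+1)) := by
          congr 2
          · rw [Finset.sum_range_succ (fun t : ℕ => ((n:ℂ) + 1/2 - ((t:ℂ)+1)/2) * (besselD n (t+1) * D (t+1))) n,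
              besselD_zero n (n+1) (by omega)]
            have h1 : ∀ t ∈ range n, ((n:ℂ) + 1/2 - (((t:ℕ)+1:ℕ):ℂ)/2) * (besselD n (t+1) * D (t+1))
                = ((n:ℂ) + 1/2 - ((t:ℂ)+1)/2) * (besselD n (t+1) * D (t+1)) := by
              intro t _; push_cast; ring
            rw [Finset.sum_congr rfl h1]
            ring
          · norm_num
      _ = ∑ t ∈ range (n+1), (((n:ℂ) + 1/2 - ((t:ℂ)+1)/2) * besselD n (t+1)
            - (1/2) * besselD n t) * D (t+1)
            + (((n:ℂ) + 1/2) * besselD n 0) * D 0 := by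
          have h2 : ∀ t ∈ range (n+1), (((n:ℂ) + 1/2 - ((t:ℂ)+1)/2) * besselD n (t+1)
              - (1/2) * besselD n t) * D (t+1)
              = ((n:ℂ) + 1/2 - ((t:ℂ)+1)/2) * (besselD n (t+1) * D (t+1))
                - (1/2) * (besselD n t * D (t+1)) := fun t _ => by ring
          rw [Finset.sum_congr rfl h2, Finset.sum_sub_distrib]
          ring
      _ = ∑ t ∈ range (n+1), besselD (n+1) (t+1) * D (t+1) + besselD (n+1) 0 * D 0 := by
          simp only [besselD]
      _ = ∑ t ∈ range (n+1+1), besselD (n+1) t * D t :=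
          (Finset.sum_range_succ' (fun t => besselD (n+1) t * D t) (n+1)).symm

lemma shift_term (z : ℂ) (hz : z ≠ 0) (t m : ℕ) :
    ((-1:ℂ)^(m+t) / (((m+t).factorial : ℂ) * z^(m+t))) * (((m+t).descFactorial t : ℕ) : ℂ)
      = ((-1)^t * (z⁻¹)^t) * ((-1/z)^m / (m.factorial : ℂ)) := by
  have hnat : m.factorial * ((m+t).descFactorial t) = (m+t).factorial := by
    have h := Nat.factorial_mul_descFactorial (Nat.le_add_left t m)
    rwa [Nat.add_sub_cancel] at h
  have hfm : (m.factorial : ℂ) ≠ 0 := Nat.cast_ne_zero.2 (Nat.factorial_ne_zero _)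
  have hfmt : ((m+t).factorial : ℂ) ≠ 0 := Nat.cast_ne_zero.2 (Nat.factorial_ne_zero _)
  have hdesc : (((m+t).descFactorial t : ℕ) : ℂ) = ((m+t).factorial : ℂ) / (m.factorial : ℂ) := by
    rw [eq_div_iff hfm, mul_comm]
    exact_mod_cast congrArg (Nat.cast (R := ℂ)) hnat
  rw [hdesc, pow_add, pow_add, inv_pow]
  have hzm : z ^ m ≠ 0 := pow_ne_zero _ hz
  have hzt : z ^ t ≠ 0 := pow_ne_zero _ hz
  field_simp
  rw [← mul_pow]
  congr 1
  field_simp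

lemma summable_desc (z : ℂ) (hz : z ≠ 0) (t : ℕ) :
    Summable (fun k : ℕ => ((-1:ℂ)^k / ((k.factorial : ℂ) * z^k)) * ((k.descFactorial t : ℕ) : ℂ)) := by
  have hinj : Function.Injective (fun m : ℕ => m + t) := add_left_injective t
  rw [← Function.Injective.summable_iff hinj]
  · apply Summable.congr (((NormedSpace.expSeries_div_summable (-1/z)).mul_left ((-1:ℂ)^t * (z⁻¹)^t)))
    intro m
    exact (shift_term z hz t m).symm
  · intro k hk
    have hkt : k < t := by
      by_contra hc
      exact hk ⟨k - t, by dsimp; omega⟩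
    simp [Nat.descFactorial_eq_zero_iff_lt.2 hkt]

lemma tsum_desc (z : ℂ) (hz : z ≠ 0) (t : ℕ) :
    ∑' k : ℕ, ((-1:ℂ)^k / ((k.factorial : ℂ) * z^k)) * ((k.descFactorial t : ℕ) : ℂ)
      = ((-1)^t * (z⁻¹)^t) * Complex.exp (-1/z) := by
  have hinj : Function.Injective (fun m : ℕ => m + t) := add_left_injective t
  have hvan : ∀ k ∉ Set.range (fun m : ℕ => m + t),
      ((-1:ℂ)^k / ((k.factorial : ℂ) * z^k)) * ((k.descFactorial t : ℕ) : ℂ) = 0 := by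
    intro k hk
    have hkt : k < t := by
      by_contra hc
      exact hk ⟨k - t, by dsimp; omega⟩
    simp [Nat.descFactorial_eq_zero_iff_lt.2 hkt]
  rw [← Function.Injective.tsum_eq hinj (fun k hk => by
    by_contra hr
    exact (Function.mem_support.1 hk) (hvan k hr))]
  have : ∀ m : ℕ, ((-1:ℂ)^(m+t) / (((m+t).factorial : ℂ) * z^(m+t))) * (((m+t).descFactorial t : ℕ) : ℂ)
      = ((-1)^t * (z⁻¹)^t) * ((-1/z)^m / (m.factorial : ℂ)) := shift_term z hz t
  rw [tsum_congr this, tsum_mul_left]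
  congr 1
  rw [Complex.exp_eq_exp_ℂ, NormedSpace.exp_eq_tsum_div]


lemma exp_mul_exp_neg (z : ℂ) : Complex.exp (1/z) * Complex.exp (-1/z) = 1 := by
  rw [← Complex.exp_add, show (1:ℂ)/z + -1/z = 0 from by ring, Complex.exp_zero]

lemma term_eq (n j : ℕ) (hj : j ≤ n) (z : ℂ) (hz : z ≠ 0) :
    ((n.choose (n-j) : ℂ) * (ascPochhammer ℂ (n-j)).eval ((n:ℂ) + 0 + 1) * (z/2)^(n-j))
      = ((2*z)^n * Complex.exp (1/z)) *
        (besselD n j * ((((-1:ℂ))^j * (z⁻¹)^j) * Complex.exp (-1/z))) := by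
  obtain ⟨k, rfl⟩ : ∃ k, n = k + j := ⟨n - j, by omega⟩
  have hden : ((4:ℂ)^(k+j) * ((j.factorial : ℕ) : ℂ) * (((k+j-j).factorial : ℕ) : ℂ)) ≠ 0 := by
    refine mul_ne_zero (mul_ne_zero (by norm_num) ?_) ?_ <;>
      exact Nat.cast_ne_zero.2 (Nat.factorial_ne_zero _)
  have hbd : besselD (k+j) j
      = ((-1:ℂ))^j * 2^j * (((2*(k+j) - j).factorial : ℕ) : ℂ)
        / ((4:ℂ)^(k+j) * ((j.factorial : ℕ) : ℂ) * (((k+j-j).factorial : ℕ) : ℂ)) := by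
    rw [eq_div_iff hden]
    linear_combination besselD_eq_mul (k+j) j hj
  have e1 : k + j - j = k := by omega
  have e2 : 2*(k+j) - j = (k+j) + k := by omega
  have e3 : ((k+j:ℕ):ℂ) + 0 + 1 = (((k+j+1 : ℕ)):ℂ) := by push_cast; ring
  have hasc : (((k+j+1).ascFactorial k : ℕ) : ℂ)
      = (((k+j+k).factorial : ℕ) : ℂ) / (((k+j).factorial : ℕ) : ℂ) := by
    rw [eq_div_iff (Nat.cast_ne_zero.2 (Nat.factorial_ne_zero _)), mul_comm]
    exact_mod_cast congrArg (Nat.cast (R := ℂ)) (Nat.factorial_mul_ascFactorial (k+j) k)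
  have hch : ((k+j).choose ((k+j)-j) : ℂ)
      = (((k+j).factorial : ℕ) : ℂ) / (((k.factorial : ℕ) : ℂ) * (((j.factorial : ℕ)) : ℂ)) := by
    rw [e1, Nat.cast_choose ℂ (by omega : k ≤ k + j), show k + j - k = j from by omega]
  rw [show ((2*z)^(k+j) * Complex.exp (1/z)) *
        (besselD (k+j) j * ((((-1:ℂ))^j * (z⁻¹)^j) * Complex.exp (-1/z)))
      = (2*z)^(k+j) * besselD (k+j) j * (((-1:ℂ))^j * (z⁻¹)^j)
        * (Complex.exp (1/z) * Complex.exp (-1/z)) from by ring,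
    exp_mul_exp_neg, mul_one, hbd, hch, e1, e2, e3,
    ← ascPochhammer_eval_cast, ascPochhammer_nat_eq_ascFactorial, hasc]
  have f1 : ((k.factorial : ℕ) : ℂ) ≠ 0 := Nat.cast_ne_zero.2 (Nat.factorial_ne_zero _)
  have f2 : ((j.factorial : ℕ) : ℂ) ≠ 0 := Nat.cast_ne_zero.2 (Nat.factorial_ne_zero _)
  have f3 : (((k+j).factorial : ℕ) : ℂ) ≠ 0 := Nat.cast_ne_zero.2 (Nat.factorial_ne_zero _)
  have f4 : (4:ℂ)^(k+j) ≠ 0 := by norm_num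
  field_simp
  rw [show (4:ℂ) = 2^2 from by norm_num]
  ring_nf
  rw [show ((-1:ℂ))^(j*2) = 1 from by rw [mul_comm, pow_mul]; norm_num]
  ring_nf
  have hzj : z ^ j * z⁻¹ ^ j = 1 := by rw [← mul_pow, mul_inv_cancel₀ hz, one_pow]
  have h4k : (1/2 : ℂ) ^ k * 4 ^ k = 2 ^ k := by rw [← mul_pow]; norm_num
  rw [show ((2:ℂ))^(j*2) = 4^j from by rw [mul_comm, pow_mul]; norm_num]
  linear_combination (↑(k * 2 + j).factorial * z ^ k * 4 ^ j) * h4k - (↑(k * 2 + j).factorial * z ^ k * 2 ^ k * 4 ^ j) * hzj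

theorem genBessel_zero_series (n : ℕ) (z : ℂ) (hz : z ≠ 0) :
    genBessel n 0 z =
      (2 * z) ^ n * Complex.exp (1 / z) *
        ∑' k : ℕ, ((-1 : ℂ) ^ k / ((k.factorial : ℂ) * z ^ k)) *
          (ascPochhammer ℂ n).eval ((1 : ℂ) / 2 - (k : ℂ) / 2) := by
  have hP : ∀ k : ℕ, ((-1 : ℂ) ^ k / ((k.factorial : ℂ) * z ^ k)) *
      (ascPochhammer ℂ n).eval ((1 : ℂ) / 2 - (k : ℂ) / 2)
      = ∑ t ∈ Finset.range (n+1), besselD n t *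
          (((-1:ℂ)^k / ((k.factorial : ℂ) * z^k)) * ((k.descFactorial t : ℕ) : ℂ)) := by
    intro k
    have h1 := keyA n (k:ℂ)
    rw [show ((1:ℂ) - (k:ℂ))/2 = 1/2 - (k:ℂ)/2 from by ring] at h1
    rw [h1, Finset.mul_sum]
    refine Finset.sum_congr rfl fun t _ => ?_
    rw [descPochhammer_eval_eq_descFactorial]
    ring
  rw [tsum_congr hP, Summable.tsum_finsetSum (fun t _ => (summable_desc z hz t).mul_left _)]
  have h2 : ∀ t ∈ Finset.range (n+1),
      (∑' k:ℕ, besselD n t * (((-1:ℂ)^k / ((k.factorial : ℂ) * z^k)) * ((k.descFactorial t : ℕ) : ℂ)))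
      = besselD n t * ((((-1:ℂ))^t * (z⁻¹)^t) * Complex.exp (-1/z)) := fun t _ => by
    rw [tsum_mul_left, tsum_desc z hz t]
  rw [Finset.sum_congr rfl h2, Finset.mul_sum, genBessel,
    ← Finset.sum_range_reflect (fun k => (n.choose k : ℂ) * (ascPochhammer ℂ k).eval ((n:ℂ) + 0 + 1) * (z/2)^k) (n+1)]
  refine Finset.sum_congr rfl fun j hj => ?_
  have hjn : j ≤ n := by
    rw [Finset.mem_range] at hj
    omega
  have := term_eq n j hjn z hz
  simpa using this
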